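/- arXiv:1903.08540 — 5 statements merged into one kernel-verified Lean document; each statement's English description precedes it below -/
import Mathlib

section
/- The function τ : (-π, 0) → (0, ∞), τ(y) = sqrt(1 - y·cot(y) + log(y/sin(y))), is a continuous bijection from (-π, 0) onto (0, ∞) whose inverse y : (0, ∞) → (-π, 0) is continuous; consequently, for every τ₀ > 0 there is a unique y ∈ (-π, 0) with τ(y) = τ₀. -/
open Real Set Filter Topology

noncomputable def Ftau (y : ℝ) : ℝ :=
  1 - y * (Real.cos y / Real.sin y) + Real.log (y / Real.sin y)

lemma Ftau_sin_neg {y : ℝ} (hy : y ∈ Ioo (-Real.pi) 0) : Real.sin y < 0 := by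
  have h : 0 < Real.sin (-y) :=
    Real.sin_pos_of_pos_of_lt_pi (by linarith [hy.2]) (by linarith [hy.1])
  rw [Real.sin_neg] at h; linarith

lemma Ftau_div_pos {y : ℝ} (hy : y ∈ Ioo (-Real.pi) 0) : 0 < y / Real.sin y :=
  div_pos_of_neg_of_neg hy.2 (Ftau_sin_neg hy)

lemma hasDerivAt_Ftau {y : ℝ} (hy : y ∈ Ioo (-Real.pi) 0) :
    HasDerivAt Ftau
      (((Real.sin y - y * Real.cos y) ^ 2 + (y * Real.sin y) ^ 2) / (y * Real.sin y ^ 2)) y := by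
  have hs : Real.sin y ≠ 0 := (Ftau_sin_neg hy).ne
  have hy0 : y ≠ 0 := hy.2.ne
  have hcot : HasDerivAt (fun x => Real.cos x / Real.sin x)
      ((-Real.sin y * Real.sin y - Real.cos y * Real.cos y) / Real.sin y ^ 2) y :=
    (Real.hasDerivAt_cos y).div (Real.hasDerivAt_sin y) hs
  have h1 : HasDerivAt (fun x => x * (Real.cos x / Real.sin x))
      (1 * (Real.cos y / Real.sin y) +
        y * ((-Real.sin y * Real.sin y - Real.cos y * Real.cos y) / Real.sin y ^ 2)) y :=
    (hasDerivAt_id y).mul hcot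
  have hq : HasDerivAt (fun x => x / Real.sin x)
      ((1 * Real.sin y - y * Real.cos y) / Real.sin y ^ 2) y :=
    (hasDerivAt_id y).div (Real.hasDerivAt_sin y) hs
  have hql : HasDerivAt (fun x => Real.log (x / Real.sin x))
      (((1 * Real.sin y - y * Real.cos y) / Real.sin y ^ 2) / (y / Real.sin y)) y :=
    hq.log (Ftau_div_pos hy).ne'
  have h := ((hasDerivAt_const y (1 : ℝ)).sub h1).add hql
  convert h using 1
  · rfl
  · rfl
  · rfl
  have hpyth : Real.sin y ^ 2 + Real.cos y ^ 2 = 1 := Real.sin_sq_add_cos_sq y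
  rw [div_eq_iff (by positivity)]
  field_simp
  nlinarith [hpyth, sq_nonneg (Real.sin y), sq_nonneg (Real.cos y)]

lemma deriv_Ftau_neg {y : ℝ} (hy : y ∈ Ioo (-Real.pi) 0) : deriv Ftau y < 0 := by
  rw [(hasDerivAt_Ftau hy).deriv]
  have hs := Ftau_sin_neg hy
  have hys : 0 < y * Real.sin y := mul_pos_of_neg_of_neg hy.2 hs
  have hden : y * Real.sin y ^ 2 < 0 := by nlinarith
  have hnum : 0 < (Real.sin y - y * Real.cos y) ^ 2 + (y * Real.sin y) ^ 2 := by
    nlinarith [sq_nonneg (Real.sin y - y * Real.cos y)]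
  exact div_neg_of_pos_of_neg hnum hden

lemma contOn_Ftau : ContinuousOn Ftau (Ioo (-Real.pi) 0) := by
  have hs : ∀ y ∈ Ioo (-Real.pi) 0, Real.sin y ≠ 0 := fun y hy => (Ftau_sin_neg hy).ne
  have hdiv : ContinuousOn (fun y : ℝ => y / Real.sin y) (Ioo (-Real.pi) 0) :=
    continuousOn_id.div Real.continuous_sin.continuousOn hs
  exact (continuousOn_const.sub (continuousOn_id.mul
    (Real.continuous_cos.continuousOn.div Real.continuous_sin.continuousOn hs))).add
    (hdiv.log fun y hy => (Ftau_div_pos hy).ne')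

lemma strictAntiOn_Ftau : StrictAntiOn Ftau (Ioo (-Real.pi) 0) := by
  apply strictAntiOn_of_deriv_neg (convex_Ioo _ _) contOn_Ftau
  rw [interior_Ioo]
  exact fun x hx => deriv_Ftau_neg hx

lemma tendsto_div_sin_one : Tendsto (fun y : ℝ => y / Real.sin y) (𝓝[<] (0 : ℝ)) (𝓝 1) := by
  have h := Real.hasDerivAt_sin 0
  rw [hasDerivAt_iff_tendsto_slope] at h
  have h2 : Tendsto (fun y : ℝ => Real.sin y / y) (𝓝[<] (0 : ℝ)) (𝓝 1) := by
    have hmono : 𝓝[<] (0 : ℝ) ≤ 𝓝[≠] (0 : ℝ) :=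
      nhdsWithin_mono 0 (fun x hx => ne_of_lt hx)
    have := h.mono_left hmono
    simp only [Real.cos_zero] at this
    refine this.congr fun y => ?_
    simp [slope_def_field, Real.sin_zero]
  have h3 := h2.inv₀ one_ne_zero
  simp only [inv_one] at h3
  refine h3.congr fun y => ?_
  rw [inv_div]

lemma tendsto_Ftau_zero : Tendsto Ftau (𝓝[<] (0 : ℝ)) (𝓝 0) := by
  have hq := tendsto_div_sin_one
  have hcos : Tendsto Real.cos (𝓝[<] (0 : ℝ)) (𝓝 1) := by
    simpa using (Real.continuous_cos.tendsto 0).mono_left nhdsWithin_le_nhds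
  have hlog : Tendsto (fun y : ℝ => Real.log (y / Real.sin y)) (𝓝[<] (0 : ℝ)) (𝓝 0) := by
    have := (Real.continuousAt_log one_ne_zero).tendsto.comp hq
    simpa [Function.comp_def] using this
  have h : Tendsto Ftau (𝓝[<] (0 : ℝ)) (𝓝 (1 - 1 * 1 + 0)) := by
    refine ((tendsto_const_nhds.sub (hq.mul hcos)).add hlog).congr fun y => ?_
    unfold Ftau
    ring
  simpa using h

lemma Ftau_pos {y : ℝ} (hy : y ∈ Ioo (-Real.pi) 0) : 0 < Ftau y := by
  have hy' : y / 2 ∈ Ioo (-Real.pi) 0 := ⟨by linarith [hy.1, hy.2], by linarith [hy.2]⟩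
  have h1 : Ftau (y / 2) < Ftau y := strictAntiOn_Ftau hy hy' (by linarith [hy.2])
  have h2 : 0 ≤ Ftau (y / 2) := by
    refine le_of_tendsto tendsto_Ftau_zero ?_
    filter_upwards [Ioo_mem_nhdsLT_of_mem (show (0:ℝ) ∈ Ioc (y/2) 0 from ⟨hy'.2, le_refl _⟩)]
      with z hz
    have hz' : z ∈ Ioo (-Real.pi) 0 := ⟨lt_trans hy'.1 hz.1, hz.2⟩
    exact (strictAntiOn_Ftau hy' hz' hz.1).le
  linarith

lemma tendsto_Ftau_top : Tendsto Ftau (𝓝[>] (-Real.pi)) atTop := by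
  have hmem : Ioo (-Real.pi) 0 ∈ 𝓝[>] (-Real.pi) :=
    Ioo_mem_nhdsGT_of_mem ⟨le_refl _, by linarith [Real.pi_pos]⟩
  have hsin : Tendsto (fun y : ℝ => -Real.sin y) (𝓝[>] (-Real.pi)) (𝓝[>] 0) := by
    rw [tendsto_nhdsWithin_iff]
    constructor
    · have : Tendsto Real.sin (𝓝 (-Real.pi)) (𝓝 (Real.sin (-Real.pi))) :=
        Real.continuous_sin.tendsto _
      simpa using (this.mono_left nhdsWithin_le_nhds).neg
    · filter_upwards [hmem] with y hy
      simpa using Ftau_sin_neg hy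
  have hinv : Tendsto (fun y : ℝ => (-Real.sin y)⁻¹) (𝓝[>] (-Real.pi)) atTop :=
    tendsto_inv_nhdsGT_zero.comp hsin
  have hid : Tendsto (fun y : ℝ => -y) (𝓝[>] (-Real.pi)) (𝓝 Real.pi) := by
    have : Tendsto (fun y : ℝ => -y) (𝓝 (-Real.pi)) (𝓝 Real.pi) := by
      simpa using (continuous_neg.tendsto (-Real.pi))
    exact this.mono_left nhdsWithin_le_nhds
  have hdivsin : Tendsto (fun y : ℝ => y / Real.sin y) (𝓝[>] (-Real.pi)) atTop := by
    have := hid.pos_mul_atTop Real.pi_pos hinv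
    refine this.congr' ?_
    filter_upwards [hmem] with y hy
    have hs : Real.sin y ≠ 0 := (Ftau_sin_neg hy).ne
    field_simp
  have hlog : Tendsto (fun y : ℝ => Real.log (y / Real.sin y)) (𝓝[>] (-Real.pi)) atTop :=
    Real.tendsto_log_atTop.comp hdivsin
  have hcos : Tendsto (fun y : ℝ => -Real.cos y) (𝓝[>] (-Real.pi)) (𝓝 1) := by
    have : Tendsto (fun y : ℝ => -Real.cos y) (𝓝 (-Real.pi)) (𝓝 (-Real.cos (-Real.pi))) :=
      (Real.continuous_cos.neg.tendsto _)
    simpa using this.mono_left nhdsWithin_le_nhds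
  have hcot : Tendsto (fun y : ℝ => (-Real.cos y) * (-Real.sin y)⁻¹) (𝓝[>] (-Real.pi)) atTop :=
    hcos.pos_mul_atTop one_pos hinv
  have hycot : Tendsto (fun y : ℝ => -(y * (Real.cos y / Real.sin y))) (𝓝[>] (-Real.pi)) atTop := by
    have h := hid.pos_mul_atTop Real.pi_pos hcot
    refine h.congr' ?_
    filter_upwards [hmem] with y hy
    have hs : Real.sin y ≠ 0 := (Ftau_sin_neg hy).ne
    field_simp
  have hsum := Filter.Tendsto.atTop_add_atTop hlog hycot
  have := tendsto_atTop_add_const_left _ 1 hsum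
  refine this.congr fun y => ?_
  unfold Ftau
  ring

lemma exists_Ftau_eq {t : ℝ} (ht : 0 < t) : ∃ y ∈ Ioo (-Real.pi) 0, Ftau y = t := by
  have hmem0 : Ioo (-Real.pi) 0 ∈ 𝓝[<] (0 : ℝ) :=
    Ioo_mem_nhdsLT_of_mem ⟨by linarith [Real.pi_pos], le_refl _⟩
  have hmemπ : Ioo (-Real.pi) 0 ∈ 𝓝[>] (-Real.pi) :=
    Ioo_mem_nhdsGT_of_mem ⟨le_refl _, by linarith [Real.pi_pos]⟩
  have ha : ∃ a, a ∈ Ioo (-Real.pi) 0 ∧ Ftau a < t := by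
    have h : ∀ᶠ y in 𝓝[<] (0 : ℝ), Ftau y < t := tendsto_Ftau_zero (Iio_mem_nhds ht)
    rcases (h.and (eventually_of_mem hmem0 fun x hx => hx)).exists with ⟨a, h1, h2⟩
    exact ⟨a, h2, h1⟩
  have hb : ∃ b, b ∈ Ioo (-Real.pi) 0 ∧ t < Ftau b := by
    have h := tendsto_Ftau_top.eventually_gt_atTop t
    rcases (h.and (eventually_of_mem hmemπ fun x hx => hx)).exists with ⟨b, h1, h2⟩
    exact ⟨b, h2, h1⟩
  obtain ⟨a, ha1, ha2⟩ := ha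
  obtain ⟨b, hb1, hb2⟩ := hb
  have hba : b < a := by
    rcases lt_trichotomy b a with h | h | h
    · exact h
    · subst h; linarith
    · have := strictAntiOn_Ftau ha1 hb1 h; linarith
  have hsub : Icc b a ⊆ Ioo (-Real.pi) 0 := fun z hz =>
    ⟨lt_of_lt_of_le hb1.1 hz.1, lt_of_le_of_lt hz.2 ha1.2⟩
  have hivt := intermediate_value_Icc' hba.le (contOn_Ftau.mono hsub)
  have ht' : t ∈ Icc (Ftau a) (Ftau b) := ⟨ha2.le, hb2.le⟩
  obtain ⟨y, hy1, hy2⟩ := hivt ht'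
  exact ⟨y, hsub hy1, hy2⟩

noncomputable def tauMap (y : Ioo (-Real.pi) (0 : ℝ)) : Ioi (0 : ℝ) :=
  ⟨Real.sqrt (Ftau y), Real.sqrt_pos.mpr (Ftau_pos y.2)⟩

lemma tauMap_strictAnti : ∀ a b : Ioo (-Real.pi) (0 : ℝ), a < b → tauMap b < tauMap a := by
  intro a b hab
  have h : Ftau b < Ftau a := strictAntiOn_Ftau a.2 b.2 hab
  exact Subtype.mk_lt_mk.mpr (Real.sqrt_lt_sqrt (Ftau_pos b.2).le h)

lemma tauMap_surjective : Function.Surjective tauMap := by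
  intro t
  obtain ⟨y, hy, hFy⟩ := exists_Ftau_eq (pow_pos t.2 2)
  refine ⟨⟨y, hy⟩, ?_⟩
  apply Subtype.ext
  show Real.sqrt (Ftau y) = (t : ℝ)
  rw [hFy, Real.sqrt_sq (le_of_lt t.2)]

/-- `τ(y) = √(1 - y cot y + log(y/sin y))` is a homeomorphism from `(-π, 0)` onto
`(0, ∞)`; consequently for every `τ₀ > 0` there is a unique `y ∈ (-π, 0)` with
`τ(y) = τ₀`. -/
theorem tau_homeomorph :
    (∃ e : (Set.Ioo (-Real.pi) (0 : ℝ)) ≃ₜ (Set.Ioi (0 : ℝ)),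
      ∀ y : Set.Ioo (-Real.pi) (0 : ℝ),
        (e y : ℝ) = Real.sqrt
          (1 - (y : ℝ) * (Real.cos y / Real.sin y) + Real.log ((y : ℝ) / Real.sin y))) ∧
    (∀ τ₀ : ℝ, 0 < τ₀ →
      ∃! y : ℝ, y ∈ Set.Ioo (-Real.pi) 0 ∧
        Real.sqrt (1 - y * (Real.cos y / Real.sin y) + Real.log (y / Real.sin y))
          = τ₀) := by
  constructor
  · set f : Ioo (-Real.pi) (0 : ℝ) → (Ioi (0 : ℝ))ᵒᵈ := fun y => OrderDual.toDual (tauMap y)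
    have hmono : StrictMono f := fun a b hab => tauMap_strictAnti a b hab
    have hsurj : Function.Surjective f := fun t => tauMap_surjective (OrderDual.ofDual t)
    let E := StrictMono.orderIsoOfSurjective f hmono hsurj
    let D : (Ioi (0 : ℝ))ᵒᵈ ≃ₜ Ioi (0 : ℝ) :=
      ⟨OrderDual.ofDual, continuous_ofDual, continuous_toDual⟩
    refine ⟨E.toHomeomorph.trans D, fun y => ?_⟩
    show ((OrderDual.ofDual (E y) : Ioi (0:ℝ)) : ℝ) = _
    have : E y = f y := by
      rw [show (E : _ → _) = f from StrictMono.coe_orderIsoOfSurjective f hmono hsurj]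
    rw [this]
    rfl
  · intro t ht
    obtain ⟨y, hy, hFy⟩ := exists_Ftau_eq (pow_pos ht 2)
    refine ⟨y, ⟨hy, ?_⟩, ?_⟩
    · show Real.sqrt (Ftau y) = t
      rw [hFy, Real.sqrt_sq ht.le]
    · rintro z ⟨hz, hFz⟩
      have hFz' : Ftau z = t ^ 2 := by
        have h1 : Real.sqrt (Ftau z) = t := hFz
        have := congrArg (fun x => x ^ 2) h1
        simpa [Real.sq_sqrt (Ftau_pos hz).le] using this
      by_contra hne
      rcases lt_or_gt_of_ne hne with h | h
      · have := strictAntiOn_Ftau hz hy h; rw [hFz', hFy] at this; exact lt_irrefl _ this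
      · have := strictAntiOn_Ftau hy hz h; rw [hFz', hFy] at this; exact lt_irrefl _ this
end

section
/- For every τ > 0 there is a unique θ in the region Ω = {θ ∈ ℂ : Re(θ) ∈ (0, π), Im(θ) < 0} satisfying e^{iθ} - iθ = 1 - τ². -/
open Filter Topology Complex

noncomputable def fsad (x : ℝ) : ℝ :=
  x * Real.cos x / Real.sin x - Real.log (x / Real.sin x)

lemma fsad_hasDerivAt {x : ℝ} (hx : x ∈ Set.Ioo 0 Real.pi) :
    HasDerivAt fsad
      (-(((x - Real.sin x * Real.cos x) ^ 2 + Real.sin x ^ 4) / (x * Real.sin x ^ 2))) x := by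
  have hs : 0 < Real.sin x := Real.sin_pos_of_pos_of_lt_pi hx.1 hx.2
  have hs' : Real.sin x ≠ 0 := ne_of_gt hs
  have hx0 : x ≠ 0 := ne_of_gt hx.1
  have h1 : HasDerivAt (fun x : ℝ => x * Real.cos x / Real.sin x)
      (((Real.cos x - x * Real.sin x) * Real.sin x - x * Real.cos x * Real.cos x) /
        Real.sin x ^ 2) x := by
    have := ((hasDerivAt_id x).mul (Real.hasDerivAt_cos x)).div (Real.hasDerivAt_sin x) hs'
    refine this.congr_deriv ?_
    simp only [id_eq, Pi.mul_apply]
    ring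
  have hu : HasDerivAt (fun x : ℝ => x / Real.sin x)
      ((Real.sin x - x * Real.cos x) / Real.sin x ^ 2) x := by
    have := (hasDerivAt_id x).div (Real.hasDerivAt_sin x) hs'
    refine this.congr_deriv ?_
    simp only [id_eq, Pi.mul_apply]
    ring
  have hux : x / Real.sin x ≠ 0 := div_ne_zero hx0 hs'
  have h2 : HasDerivAt (fun x : ℝ => Real.log (x / Real.sin x))
      ((x / Real.sin x)⁻¹ * ((Real.sin x - x * Real.cos x) / Real.sin x ^ 2)) x :=
    by have := (Real.hasDerivAt_log hux).comp x hu; exact this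
  have h := h1.sub h2
  refine h.congr_deriv ?_
  field_simp
  linear_combination (Real.sin x ^ 2 - x ^ 2) * (Real.sin_sq_add_cos_sq x)

lemma fsad_strictAntiOn : StrictAntiOn fsad (Set.Ioo 0 Real.pi) := by
  apply strictAntiOn_of_deriv_neg (convex_Ioo _ _)
  · exact fun x hx => (fsad_hasDerivAt hx).continuousAt.continuousWithinAt
  · intro x hx
    rw [interior_Ioo] at hx
    rw [(fsad_hasDerivAt hx).deriv]
    have hs : 0 < Real.sin x := Real.sin_pos_of_pos_of_lt_pi hx.1 hx.2
    have h1 : 0 < (x - Real.sin x * Real.cos x) ^ 2 + Real.sin x ^ 4 :=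
      add_pos_of_nonneg_of_pos (sq_nonneg _) (pow_pos hs 4)
    have h2 : 0 < x * Real.sin x ^ 2 := mul_pos hx.1 (pow_pos hs 2)
    have := div_pos h1 h2
    linarith

lemma tendsto_div_sin : Tendsto (fun x : ℝ => x / Real.sin x) (𝓝[>] 0) (𝓝 1) := by
  have h : Tendsto (slope Real.sin 0) (𝓝[≠] (0:ℝ)) (𝓝 1) := by
    have := hasDerivAt_iff_tendsto_slope.mp (Real.hasDerivAt_sin 0)
    simpa using this
  have h2 : Tendsto (fun x : ℝ => Real.sin x / x) (𝓝[≠] (0:ℝ)) (𝓝 1) := by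
    refine h.congr fun x => ?_
    simp [slope_def_field, div_eq_div_iff]
  have h3 := h2.inv₀ one_ne_zero
  simp only [inv_div, inv_one] at h3
  exact h3.mono_left (nhdsWithin_mono _ fun x hx => ne_of_gt hx)

lemma fsad_tendsto_zero : Tendsto fsad (𝓝[>] (0:ℝ)) (𝓝 1) := by
  have hcos : Tendsto (fun x : ℝ => Real.cos x) (𝓝[>] (0:ℝ)) (𝓝 1) := by
    simpa using (Real.continuous_cos.tendsto 0).mono_left nhdsWithin_le_nhds
  have hlog : Tendsto (fun x : ℝ => Real.log (x / Real.sin x)) (𝓝[>] (0:ℝ)) (𝓝 0) := by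
    have := (Real.continuousAt_log one_ne_zero).tendsto.comp tendsto_div_sin
    simpa [Function.comp_def] using this
  have := (tendsto_div_sin.mul hcos).sub hlog
  norm_num at this
  refine this.congr fun x => ?_
  unfold fsad
  ring_nf

lemma fsad_tendsto_pi : Tendsto fsad (𝓝[<] Real.pi) atBot := by
  have hπ := Real.pi_pos
  have hmem : ∀ᶠ x in 𝓝[<] Real.pi, x ∈ Set.Ioo 0 Real.pi :=
    Ioo_mem_nhdsLT_of_mem ⟨hπ, le_refl _⟩
  have hsin : Tendsto Real.sin (𝓝[<] Real.pi) (𝓝[>] 0) := by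
    rw [tendsto_nhdsWithin_iff]
    constructor
    · have := (Real.continuous_sin.tendsto Real.pi).mono_left (nhdsWithin_le_nhds (s := Set.Iio Real.pi))
      simpa using this
    · exact hmem.mono fun x hx => Real.sin_pos_of_pos_of_lt_pi hx.1 hx.2
  have hinv : Tendsto (fun x : ℝ => (Real.sin x)⁻¹) (𝓝[<] Real.pi) atTop :=
    tendsto_inv_nhdsGT_zero.comp hsin
  have hxc : Tendsto (fun x : ℝ => x * Real.cos x) (𝓝[<] Real.pi) (𝓝 (-Real.pi)) := by
    have := ((continuous_id.mul Real.continuous_cos).tendsto Real.pi).mono_left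
      (nhdsWithin_le_nhds (s := Set.Iio Real.pi))
    simpa [Pi.mul_def] using this
  have hterm1 : Tendsto (fun x : ℝ => x * Real.cos x * (Real.sin x)⁻¹) (𝓝[<] Real.pi) atBot :=
    hxc.neg_mul_atTop (by linarith) hinv
  have hlogsin : Tendsto (fun x : ℝ => Real.log (Real.sin x)) (𝓝[<] Real.pi) atBot :=
    Real.tendsto_log_nhdsGT_zero.comp hsin
  have hterm12 : Tendsto (fun x : ℝ => x * Real.cos x * (Real.sin x)⁻¹ + Real.log (Real.sin x))
      (𝓝[<] Real.pi) atBot := by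
    apply tendsto_atBot_add_right_of_ge' _ (0:ℝ) hterm1
    exact hmem.mono fun x hx => Real.log_nonpos (le_of_lt (Real.sin_pos_of_pos_of_lt_pi hx.1 hx.2)) (Real.sin_le_one x)
  have hlogx : Tendsto (fun x : ℝ => -Real.log x) (𝓝[<] Real.pi) (𝓝 (-Real.log Real.pi)) := by
    have := ((Real.continuousAt_log (ne_of_gt hπ)).tendsto.comp
      (tendsto_id.mono_left (nhdsWithin_le_nhds (s := Set.Iio Real.pi)))).neg
    simpa using this
  have := hterm12.atBot_add hlogx
  apply this.congr'
  filter_upwards [hmem] with x hx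
  have hs : 0 < Real.sin x := Real.sin_pos_of_pos_of_lt_pi hx.1 hx.2
  unfold fsad
  rw [Real.log_div (ne_of_gt hx.1) (ne_of_gt hs)]
  field_simp
  ring

lemma saddle_eq_iff (θ : ℂ) (c : ℝ) :
    Complex.exp (Complex.I * θ) - Complex.I * θ = (c : ℂ) ↔
      Real.exp (-θ.im) * Real.cos θ.re + θ.im = c ∧
        Real.exp (-θ.im) * Real.sin θ.re - θ.re = 0 := by
  rw [Complex.ext_iff]
  simp only [Complex.sub_re, Complex.sub_im, Complex.exp_re, Complex.exp_im,
    Complex.mul_re, Complex.mul_im, Complex.I_re, Complex.I_im, Complex.ofReal_re,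
    Complex.ofReal_im]
  constructor <;> intro h <;> constructor <;> [skip; skip; skip; skip] <;>
    · have h1 := h.1; have h2 := h.2; ring_nf at h1 h2 ⊢ <;> linarith

-- for any x in Ioo 0 π, the θ with re = x solving the imaginary part
lemma region_char {θ : ℂ} (hre : θ.re ∈ Set.Ioo 0 Real.pi) (him : θ.im < 0)
    (heq : Real.exp (-θ.im) * Real.sin θ.re - θ.re = 0) :
    θ.im = -Real.log (θ.re / Real.sin θ.re) := by
  have hs : 0 < Real.sin θ.re := Real.sin_pos_of_pos_of_lt_pi hre.1 hre.2
  have h1 : Real.exp (-θ.im) = θ.re / Real.sin θ.re := by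
    field_simp
    linarith
  have := congrArg Real.log h1
  rw [Real.log_exp] at this
  linarith

-- fsad value characterization on the region
lemma fsad_of_solution {θ : ℂ} (hre : θ.re ∈ Set.Ioo 0 Real.pi) (him : θ.im < 0)
    (heqre : Real.exp (-θ.im) * Real.cos θ.re + θ.im = 1 - τ^2)
    (heqim : Real.exp (-θ.im) * Real.sin θ.re - θ.re = 0) :
    fsad θ.re = 1 - τ^2 := by
  have hs : 0 < Real.sin θ.re := Real.sin_pos_of_pos_of_lt_pi hre.1 hre.2
  have h1 : θ.im = -Real.log (θ.re / Real.sin θ.re) := region_char hre him heqim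
  have h2 : Real.exp (-θ.im) = θ.re / Real.sin θ.re := by
    rw [h1, neg_neg, Real.exp_log (div_pos hre.1 hs)]
  rw [h2, h1] at heqre
  unfold fsad
  rw [div_mul_eq_mul_div] at heqre
  linarith

/-- For every `τ > 0` there is a unique `θ` in
`Ω = {θ : Re θ ∈ (0, π), Im θ < 0}` satisfying `e^{iθ} - iθ = 1 - τ²`. -/
theorem unique_saddle_solution (τ : ℝ) (hτ : 0 < τ) :
    ∃! θ : ℂ, (θ.re ∈ Set.Ioo 0 Real.pi ∧ θ.im < 0) ∧
      Complex.exp (Complex.I * θ) - Complex.I * θ = 1 - (τ : ℂ) ^ 2 := by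
  have hπ := Real.pi_pos
  have hcast : (1 : ℂ) - (τ : ℂ) ^ 2 = ((1 - τ^2 : ℝ) : ℂ) := by push_cast; ring
  -- find a with fsad a > 1 - τ²
  obtain ⟨a, hfa, ha⟩ : ∃ a, 1 - τ^2 < fsad a ∧ a ∈ Set.Ioo 0 Real.pi := by
    have h1 : (1:ℝ) - τ^2 < 1 := by nlinarith
    have h2 : ∀ᶠ x in 𝓝[>] (0:ℝ), 1 - τ^2 < fsad x :=
      fsad_tendsto_zero.eventually (eventually_gt_nhds h1)
    have h3 : ∀ᶠ x in 𝓝[>] (0:ℝ), x ∈ Set.Ioo 0 Real.pi :=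
      Ioo_mem_nhdsGT_of_mem ⟨le_refl _, hπ⟩
    exact (h2.and h3).exists
  obtain ⟨b, hfb, hb⟩ : ∃ b, fsad b < 1 - τ^2 ∧ b ∈ Set.Ioo 0 Real.pi := by
    have h2 : ∀ᶠ x in 𝓝[<] Real.pi, fsad x < 1 - τ^2 :=
      fsad_tendsto_pi.eventually (eventually_lt_atBot _)
    have h3 : ∀ᶠ x in 𝓝[<] Real.pi, x ∈ Set.Ioo 0 Real.pi :=
      Ioo_mem_nhdsLT_of_mem ⟨hπ, le_refl _⟩
    exact (h2.and h3).exists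
  have hab : a < b := by
    rcases lt_trichotomy a b with h | h | h
    · exact h
    · exfalso; rw [h] at hfa; linarith
    · exfalso; have := fsad_strictAntiOn hb ha h; linarith
  have hIcc : Set.Icc a b ⊆ Set.Ioo 0 Real.pi := Set.Icc_subset_Ioo ha.1 hb.2
  have hcont : ContinuousOn fsad (Set.Icc a b) := fun x hx =>
    (fsad_hasDerivAt (hIcc hx)).continuousAt.continuousWithinAt
  obtain ⟨x₀, hx₀mem, hx₀⟩ : ∃ x₀ ∈ Set.Icc a b, fsad x₀ = 1 - τ^2 := by
    have h := intermediate_value_Icc' (le_of_lt hab) hcont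
    exact h ⟨le_of_lt hfb, le_of_lt hfa⟩
  have hx₀Ioo : x₀ ∈ Set.Ioo 0 Real.pi := hIcc hx₀mem
  have hs : 0 < Real.sin x₀ := Real.sin_pos_of_pos_of_lt_pi hx₀Ioo.1 hx₀Ioo.2
  set u₀ : ℝ := x₀ / Real.sin x₀ with hu₀def
  have hu₀ : 1 < u₀ := (one_lt_div hs).mpr (Real.sin_lt hx₀Ioo.1)
  refine ⟨⟨x₀, -Real.log u₀⟩, ⟨⟨hx₀Ioo, ?_⟩, ?_⟩, ?_⟩
  · simpa using Real.log_pos hu₀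
  · rw [hcast, saddle_eq_iff]
    have hexp : Real.exp (-(-Real.log u₀)) = u₀ := by
      rw [neg_neg, Real.exp_log (by positivity)]
    constructor
    · show Real.exp (-(-Real.log u₀)) * Real.cos x₀ + -Real.log u₀ = 1 - τ^2
      rw [hexp]
      rw [← hx₀]
      unfold fsad
      rw [← hu₀def, div_mul_eq_mul_div]
      ring
    · show Real.exp (-(-Real.log u₀)) * Real.sin x₀ - x₀ = 0
      rw [hexp, hu₀def, div_mul_cancel₀ _ (ne_of_gt hs), sub_self]
  · rintro θ ⟨⟨hre, him⟩, heq⟩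
    rw [hcast, saddle_eq_iff] at heq
    have hfθ : fsad θ.re = 1 - τ^2 := fsad_of_solution hre him heq.1 heq.2
    have hxeq : θ.re = x₀ := fsad_strictAntiOn.injOn hre hx₀Ioo (by rw [hfθ, hx₀])
    have hyeq : θ.im = -Real.log u₀ := by
      have := region_char hre him heq.2
      rw [hxeq] at this
      exact this
    exact Complex.ext hxeq hyeq
end

section
/- If y ∈ (-π, 0) and x = -y·cot(y), then x > -1; hence every solution z = x + iy of z e^z = -e^{τ²-1} with Im(z) ∈ (-π, 0) lies in the region R = {z ∈ ℂ : Re(z) > -1, Im(z) ∈ (-π, 0)}. -/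
open Complex

/-! For `t ∈ (0, π)` one has `t cos t < sin t`: trivially when `cos t ≤ 0`, and from `t < tan t`
otherwise. Taking imaginary parts in `z e^z = -e^{τ²-1}` gives `x sin y + y cos y = 0`, so that
`x = -y cot y`, which exceeds `-1` by this inequality at `t = -y`. -/

namespace Real

theorem mul_cos_lt_sin {t : ℝ} (h0 : 0 < t) (hπ : t < π) : t * cos t < sin t := by
  have hsin : 0 < sin t := sin_pos_of_pos_of_lt_pi h0 hπ
  rcases le_or_gt (π / 2) t with ht | ht
  · have hcos : cos t ≤ 0 := cos_nonpos_of_pi_div_two_le_of_le ht (by linarith)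
    nlinarith
  · have hcos : 0 < cos t := cos_pos_of_mem_Ioo ⟨by linarith, ht⟩
    have htan : t < sin t / cos t := tan_eq_sin_div_cos t ▸ lt_tan h0 ht
    exact (lt_div_iff₀ hcos).mp htan

theorem neg_one_lt_neg_mul_cot {y : ℝ} (hy : y ∈ Set.Ioo (-π) 0) :
    -1 < -y * (cos y / sin y) := by
  obtain ⟨hlo, hhi⟩ := hy
  have hsin : sin y < 0 := sin_neg_of_neg_of_neg_pi_lt hhi hlo
  have h := mul_cos_lt_sin (t := -y) (by linarith) (by linarith)
  rw [cos_neg, sin_neg] at h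
  rw [← mul_div_assoc, lt_div_iff_of_neg hsin]
  linarith

end Real

namespace Complex

theorem im_mul_exp (z : ℂ) :
    (z * exp z).im = Real.exp z.re * (z.re * Real.sin z.im + z.im * Real.cos z.im) := by
  rw [mul_im, exp_re, exp_im]
  ring

theorem re_eq_neg_mul_cot_of_im_mul_exp_eq_zero {z : ℂ} (h : (z * exp z).im = 0)
    (hsin : Real.sin z.im ≠ 0) : z.re = -z.im * (Real.cos z.im / Real.sin z.im) := by
  rw [im_mul_exp, mul_eq_zero] at h
  have hsum := h.resolve_left (Real.exp_pos _).ne'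
  rw [← mul_div_assoc, eq_div_iff hsin]
  linear_combination hsum

end Complex

/-- For `y ∈ (-π, 0)` one has `-y cot y > -1`; hence every solution `z` of
`z e^z = -e^{τ²-1}` with `Im z ∈ (-π, 0)` lies in `{Re z > -1, Im z ∈ (-π,0)}`. -/
theorem region_R :
    (∀ y ∈ Set.Ioo (-Real.pi) (0 : ℝ),
      -y * (Real.cos y / Real.sin y) > -1) ∧
    (∀ τ : ℝ, 0 < τ → ∀ z : ℂ,
      z * Complex.exp z = -Complex.exp ((τ : ℂ) ^ 2 - 1) →
      z.im ∈ Set.Ioo (-Real.pi) 0 → z.re > -1) := by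
  refine ⟨fun y hy => Real.neg_one_lt_neg_mul_cot hy, fun τ _ z hz hy => ?_⟩
  have him : (z * exp z).im = 0 := by
    rw [hz, ← ofReal_pow, ← ofReal_one, ← ofReal_sub, ← ofReal_exp, ← ofReal_neg, ofReal_im]
  have hsin : Real.sin z.im ≠ 0 := (Real.sin_neg_of_neg_of_neg_pi_lt hy.2 hy.1).ne
  rw [gt_iff_lt, re_eq_neg_mul_cot_of_im_mul_exp_eq_zero him hsin]
  exact Real.neg_one_lt_neg_mul_cot hy
end

section
/- Define θ : ℝ → ℂ by θ(τ) = θ₊(τ) for τ > 0, θ(0) = 0, and θ(τ) = -conj(θ₊(-τ)) for τ < 0, where θ₊(τ) is the unique solution in Ω of e^{iθ} - iθ = 1 - τ². Then θ is differentiable with θ'(τ) = 2iτ/(iθ(τ) - τ²) for τ ≠ 0 and θ'(0) = √2. -/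
open Complex

private lemma theta_inj {z w : ℂ}
    (hz1 : 0 < z.re) (hz2 : z.re < Real.pi) (hz3 : z.im < 0)
    (hw1 : 0 < w.re) (hw2 : w.re < Real.pi) (hw3 : w.im < 0)
    (h : Complex.exp (I * z) - I * z = Complex.exp (I * w) - I * w) : z = w := by
  by_contra hne
  set u := I * z with hu
  set v := I * w with hv
  have hne' : u - v ≠ 0 := by
    intro h0
    exact hne (mul_left_cancel₀ I_ne_zero (sub_eq_zero.1 h0))
  have hu_re : u.re = -z.im := by simp [hu, Complex.mul_re]
  have hu_im : u.im = z.re := by simp [hu, Complex.mul_im]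
  have hv_re : v.re = -w.im := by simp [hv, Complex.mul_re]
  have hv_im : v.im = w.re := by simp [hv, Complex.mul_im]
  set γ : ℝ → ℂ := fun t => v + t • (u - v) with hγ
  have hγd : ∀ t : ℝ, HasDerivAt γ (u - v) t := by
    intro t
    have := ((hasDerivAt_id t).smul_const (u - v)).const_add v
    simpa [hγ] using this
  have hd : ∀ t ∈ Set.uIcc (0:ℝ) 1,
      HasDerivAt (fun s => Complex.exp (γ s)) (Complex.exp (γ t) * (u - v)) t := by
    intro t _
    exact (hγd t).cexp
  have hγcont : Continuous γ := by
    have : Continuous fun t : ℝ => t • (u - v) := (continuous_id).smul continuous_const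
    exact continuous_const.add this
  have hint : IntervalIntegrable (fun t => Complex.exp (γ t) * (u - v)) MeasureTheory.volume 0 1 :=
    ((Complex.continuous_exp.comp hγcont).mul continuous_const).intervalIntegrable 0 1
  have hFTC := intervalIntegral.integral_eq_sub_of_hasDerivAt hd hint
  have hγ0 : γ 0 = v := by simp [hγ]
  have hγ1 : γ 1 = u := by simp [hγ]
  rw [hγ0, hγ1] at hFTC
  -- exp u - exp v = u - v
  have hexp_sub : Complex.exp u - Complex.exp v = u - v := by
    have : Complex.exp u - u = Complex.exp v - v := h
    linear_combination this
  rw [hexp_sub] at hFTC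
  have hmul : (∫ t in (0:ℝ)..1, Complex.exp (γ t)) * (u - v) = u - v := by
    rw [← intervalIntegral.integral_mul_const]; exact hFTC
  have hone : (∫ t in (0:ℝ)..1, Complex.exp (γ t)) = 1 := by
    have := mul_right_cancel₀ hne' (hmul.trans (one_mul (u - v)).symm)
    exact this
  -- but the imaginary part of the integral is positive
  have hγint : IntervalIntegrable (fun t => Complex.exp (γ t)) MeasureTheory.volume 0 1 :=
    (Complex.continuous_exp.comp hγcont).intervalIntegrable 0 1
  have him : (∫ t in (0:ℝ)..1, (Complex.exp (γ t)).im) = 0 := by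
    have := Complex.imCLM.intervalIntegral_comp_comm hγint
    simp only [Complex.imCLM_apply] at this
    rw [this, hone]
    simp
  have hpos : 0 < ∫ t in (0:ℝ)..1, (Complex.exp (γ t)).im := by
    apply intervalIntegral.intervalIntegral_pos_of_pos_on
    · exact ((Complex.continuous_im.comp (Complex.continuous_exp.comp hγcont))).intervalIntegrable 0 1
    · intro t ht
      obtain ⟨ht0, ht1⟩ := ht
      have hre : 0 < (γ t).re := by
        have : (γ t).re = v.re + t * (u.re - v.re) := by
          simp [hγ, Complex.add_re, Complex.smul_re]
        rw [this, hu_re, hv_re]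
        nlinarith
      have him1 : 0 < (γ t).im := by
        have : (γ t).im = v.im + t * (u.im - v.im) := by
          simp [hγ, Complex.add_im, Complex.smul_im]
        rw [this, hu_im, hv_im]
        nlinarith
      have him2 : (γ t).im < Real.pi := by
        have : (γ t).im = v.im + t * (u.im - v.im) := by
          simp [hγ, Complex.add_im, Complex.smul_im]
        rw [this, hu_im, hv_im]
        nlinarith
      rw [Complex.exp_im]
      exact mul_pos (Real.exp_pos _) (Real.sin_pos_of_pos_of_lt_pi him1 him2)
    · norm_num
  rw [him] at hpos
  exact lt_irrefl 0 hpos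

private lemma deriv_pos_side (θ : ℝ → ℂ)
    (hpos : ∀ τ : ℝ, 0 < τ →
      ((θ τ).re ∈ Set.Ioo 0 Real.pi ∧ (θ τ).im < 0) ∧
      Complex.exp (Complex.I * θ τ) - Complex.I * θ τ = 1 - (τ : ℂ) ^ 2)
    {τ₀ : ℝ} (hτ₀ : 0 < τ₀) :
    HasDerivAt θ (2 * Complex.I * (τ₀ : ℂ) / (Complex.I * θ τ₀ - (τ₀ : ℂ) ^ 2)) τ₀ := by
  obtain ⟨⟨⟨hre1, hre2⟩, him⟩, heq⟩ := hpos τ₀ hτ₀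
  set z₀ := θ τ₀ with hz₀
  set f : ℂ → ℂ := fun z => Complex.exp (I * z) - I * z with hf_def
  have hIz : HasStrictDerivAt (fun z : ℂ => I * z) I z₀ := by
    simpa using (hasStrictDerivAt_id z₀).const_mul I
  have hexp : HasStrictDerivAt (fun z : ℂ => Complex.exp (I * z))
      (Complex.exp (I * z₀) * I) z₀ := by
    exact (Complex.hasStrictDerivAt_exp (I * z₀)).comp z₀ hIz
  have hf : HasStrictDerivAt f (Complex.exp (I * z₀) * I - I) z₀ := hexp.sub hIz
  -- the derivative is nonzero
  have habs : 1 < ‖Complex.exp (I * z₀)‖ := by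
    rw [Complex.norm_exp]
    have h1 : (I * z₀).re = -z₀.im := by simp [Complex.mul_re]
    rw [h1]
    calc (1:ℝ) < 1 + -z₀.im := by linarith
      _ ≤ Real.exp (-z₀.im) := by linarith [Real.add_one_le_exp (-z₀.im)]
  have hne1 : Complex.exp (I * z₀) ≠ 1 := by
    intro hh; rw [hh] at habs; simp at habs
  have hD : I * z₀ - (τ₀:ℂ)^2 ≠ 0 := by
    have h2 : Complex.exp (I * z₀) - 1 = I * z₀ - (τ₀:ℂ)^2 := by linear_combination heq
    rw [← h2]
    exact sub_ne_zero.2 hne1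
  have hf'eq : Complex.exp (I * z₀) * I - I = I * (I * z₀ - (τ₀:ℂ)^2) := by
    linear_combination I * heq
  have hne : Complex.exp (I * z₀) * I - I ≠ 0 := by
    rw [hf'eq]; exact mul_ne_zero I_ne_zero hD
  -- local inverse
  set g : ℂ → ℂ := hf.localInverse f _ z₀ hne with hg_def
  have hfz₀ : f z₀ = 1 - (τ₀:ℂ)^2 := heq
  have hgd : HasStrictDerivAt g (Complex.exp (I * z₀) * I - I)⁻¹ (f z₀) := hf.to_localInverse hne
  -- derivative of τ ↦ 1 - τ²
  have hof : HasDerivAt (fun τ : ℝ => ((τ:ℂ))) 1 τ₀ := by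
    simpa using (hasDerivAt_id τ₀).ofReal_comp
  have hq : HasDerivAt (fun τ : ℝ => 1 - ((τ:ℂ))^2) (-(2*(τ₀:ℂ))) τ₀ := by
    have h1 : (fun τ : ℝ => 1 - ((τ:ℂ))^2) = fun τ : ℝ => 1 - (τ:ℂ)*(τ:ℂ) := by
      ext τ; ring
    rw [h1]
    have h2 := (hof.mul hof).const_sub 1
    have h3 : -(2*(τ₀:ℂ)) = -(1 * (τ₀:ℂ) + (τ₀:ℂ) * 1) := by ring
    rw [h3]; exact h2
  have hgd' : HasDerivAt g (Complex.exp (I * z₀) * I - I)⁻¹ (1 - (τ₀:ℂ)^2) := by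
    rw [← hfz₀]; exact hgd.hasDerivAt
  have hcomp : HasDerivAt (fun τ : ℝ => g (1 - (τ:ℂ)^2))
      ((Complex.exp (I * z₀) * I - I)⁻¹ * (-(2*(τ₀:ℂ)))) τ₀ := by
    exact hgd'.comp τ₀ hq
  -- eventual equality with θ
  have hgz : g (1 - (τ₀:ℂ)^2) = z₀ := by
    rw [← hfz₀]
    exact (hf.hasStrictFDerivAt_equiv hne).localInverse_apply_image
  have hrev : ∀ᶠ τ : ℝ in nhds τ₀, f (g (1 - (τ:ℂ)^2)) = 1 - (τ:ℂ)^2 := by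
    have h1 := (hf.hasStrictFDerivAt_equiv hne).eventually_right_inverse
    rw [hfz₀] at h1
    exact hq.continuousAt.eventually h1
  have hΩ : ∀ᶠ τ : ℝ in nhds τ₀, g (1 - (τ:ℂ)^2) ∈
      {z : ℂ | 0 < z.re ∧ z.re < Real.pi ∧ z.im < 0} := by
    have hopen : IsOpen {z : ℂ | 0 < z.re ∧ z.re < Real.pi ∧ z.im < 0} := by
      refine (isOpen_lt continuous_const Complex.continuous_re).inter
        ((isOpen_lt Complex.continuous_re continuous_const).inter
          (isOpen_lt Complex.continuous_im continuous_const))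
    have hmem : g (1 - (τ₀:ℂ)^2) ∈ {z : ℂ | 0 < z.re ∧ z.re < Real.pi ∧ z.im < 0} := by
      rw [hgz]; exact ⟨hre1, hre2, him⟩
    exact hcomp.continuousAt.eventually_mem (hopen.mem_nhds hmem)
  have hτpos : ∀ᶠ τ : ℝ in nhds τ₀, 0 < τ := eventually_gt_nhds hτ₀
  have heqev : (fun τ => g (1 - (τ:ℂ)^2)) =ᶠ[nhds τ₀] θ := by
    filter_upwards [hrev, hΩ, hτpos] with τ h1 h2 h3
    obtain ⟨⟨⟨hre1', hre2'⟩, him'⟩, heq'⟩ := hpos τ h3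
    exact theta_inj h2.1 h2.2.1 h2.2.2 hre1' hre2' him' (h1.trans heq'.symm)
  have hθd : HasDerivAt θ ((Complex.exp (I * z₀) * I - I)⁻¹ * (-(2*(τ₀:ℂ)))) τ₀ :=
    hcomp.congr_of_eventuallyEq heqev.symm
  have hval : (Complex.exp (I * z₀) * I - I)⁻¹ * (-(2*(τ₀:ℂ)))
      = 2 * I * (τ₀:ℂ) / (I * z₀ - (τ₀:ℂ)^2) := by
    rw [hf'eq, mul_inv, Complex.inv_I]
    field_simp
  rw [← hval]
  exact hθd

private lemma conj_comp_hasDerivAt {f : ℝ → ℂ} {d : ℂ} {x : ℝ} (h : HasDerivAt f d x) :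
    HasDerivAt (fun t => (starRingEnd ℂ) (f t)) ((starRingEnd ℂ) d) x := by
  have h2 := (Complex.conjCLE.hasFDerivAt).comp x h.hasFDerivAt
  have h3 := h2.hasDerivAt
  exact h.star


private lemma deriv_neg_side (θ : ℝ → ℂ)
    (hpos : ∀ τ : ℝ, 0 < τ →
      ((θ τ).re ∈ Set.Ioo 0 Real.pi ∧ (θ τ).im < 0) ∧
      Complex.exp (Complex.I * θ τ) - Complex.I * θ τ = 1 - (τ : ℂ) ^ 2)
    (hneg : ∀ τ : ℝ, τ < 0 → θ τ = -(starRingEnd ℂ) (θ (-τ)))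
    {τ₀ : ℝ} (hτ₀ : τ₀ < 0) :
    HasDerivAt θ (2 * Complex.I * (τ₀ : ℂ) / (Complex.I * θ τ₀ - (τ₀ : ℂ) ^ 2)) τ₀ := by
  have hσ : 0 < -τ₀ := by linarith
  have hd := deriv_pos_side θ hpos hσ
  set d : ℂ := 2 * Complex.I * ((-τ₀ : ℝ) : ℂ) / (Complex.I * θ (-τ₀) - ((-τ₀ : ℝ) : ℂ) ^ 2)
    with hd_def
  have h1 : HasDerivAt (fun τ : ℝ => θ (-τ)) (-d) τ₀ := by
    have h0 := hd.scomp τ₀ (hasDerivAt_neg τ₀)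
    rw [neg_one_smul] at h0; exact h0
  have h2 : HasDerivAt (fun τ : ℝ => -(starRingEnd ℂ) (θ (-τ)))
      (-(starRingEnd ℂ) (-d)) τ₀ := (conj_comp_hasDerivAt h1).neg
  have hev : (fun τ : ℝ => -(starRingEnd ℂ) (θ (-τ))) =ᶠ[nhds τ₀] θ := by
    filter_upwards [eventually_lt_nhds hτ₀] with τ hτ
    exact (hneg τ hτ).symm
  have h3 : HasDerivAt θ (-(starRingEnd ℂ) (-d)) τ₀ := h2.congr_of_eventuallyEq hev.symm
  have hval : -(starRingEnd ℂ) (-d) = 2 * Complex.I * (τ₀ : ℂ) / (Complex.I * θ τ₀ - (τ₀ : ℂ) ^ 2) := by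
    rw [hneg τ₀ hτ₀, hd_def]
    rw [map_neg, neg_neg, map_div₀]
    push_cast
    simp only [map_mul, map_sub, map_neg, map_pow, Complex.conj_I, Complex.conj_ofReal,
      map_ofNat]
    ring_nf
  rw [← hval]
  exact h3

set_option maxHeartbeats 1000000 in
private lemma bound_pos_side (θ : ℝ → ℂ)
    (hpos : ∀ τ : ℝ, 0 < τ →
      ((θ τ).re ∈ Set.Ioo 0 Real.pi ∧ (θ τ).im < 0) ∧
      Complex.exp (Complex.I * θ τ) - Complex.I * θ τ = 1 - (τ : ℂ) ^ 2)
    {τ : ℝ} (h1 : 0 < τ) (h2 : τ ≤ 1/6) :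
    ‖θ τ / (τ:ℂ) - (Real.sqrt 2 : ℂ)‖ ≤ 40 * τ := by
  obtain ⟨⟨⟨ha1, ha2⟩, hb⟩, heq⟩ := hpos τ h1
  set a : ℝ := (θ τ).re with ha_def
  set b : ℝ := (θ τ).im with hb_def
  have hπ := Real.pi_pos
  have hπlt : Real.pi < 3.15 := by
    have := Real.pi_lt_d2
    linarith
  -- real and imaginary parts of the equation
  have hcast : ((τ:ℂ))^2 = ((τ^2 : ℝ) : ℂ) := by push_cast; ring
  rw [hcast] at heq
  have hre := congrArg Complex.re heq
  have him := congrArg Complex.im heq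
  simp only [Complex.sub_re, Complex.sub_im, Complex.mul_re, Complex.mul_im,
    Complex.I_re, Complex.I_im, Complex.exp_re, Complex.exp_im, Complex.one_re,
    Complex.one_im, Complex.ofReal_re, Complex.ofReal_im, zero_mul, one_mul,
    zero_sub, sub_zero, zero_add, sub_neg_eq_add] at hre him
  -- hre : Real.exp (-b) * Real.cos a + b = 1 - τ^2
  -- him : Real.exp (-b) * Real.sin a - a = 0 (hopefully)
  have hsina : 0 < Real.sin a := Real.sin_pos_of_pos_of_lt_pi ha1 ha2
  have hexpb : 0 < Real.exp (-b) := Real.exp_pos _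
  -- Step 1 : -b < τ^2
  have hstep1 : -b < τ^2 := by
    have hcase : Real.exp (-b) * Real.cos a < 1 := by
      rcases le_or_gt (Real.cos a) 0 with hc | hc
      · nlinarith
      · have ha2' : a < Real.pi/2 := by
          by_contra hle
          push_neg at hle
          have := Real.cos_nonpos_of_pi_div_two_le_of_le hle (by linarith)
          linarith
        have htan := Real.lt_tan ha1 ha2'
        rw [Real.tan_eq_sin_div_cos] at htan
        have hacos : a * Real.cos a < Real.sin a := by
          rw [lt_div_iff₀ hc] at htan
          linarith
        -- exp(-b) * sin a = a
        have hexp_eq : Real.exp (-b) * Real.sin a = a := by linarith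
        nlinarith
    linarith
  -- Step 2 : sin a ≥ a * (1 - τ^2)
  have hexp_eq : Real.exp (-b) * Real.sin a = a := by linarith
  have hstep2 : a * (1 - τ^2) ≤ Real.sin a := by
    have hmono : Real.exp (-b) ≤ Real.exp (τ^2) := Real.exp_le_exp.2 (by linarith)
    have h3 : a ≤ Real.exp (τ^2) * Real.sin a := by nlinarith
    have h4 : (1 - τ^2) * Real.exp (τ^2) ≤ 1 := by
      have hprod : Real.exp (τ^2) * Real.exp (-(τ^2)) = 1 := by
        rw [← Real.exp_add]; simp
      nlinarith [Real.add_one_le_exp (-(τ^2)), Real.exp_pos (τ^2), Real.exp_pos (-(τ^2))]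
    nlinarith [Real.exp_pos (τ^2)]
  -- Step 3 : sin a ≤ a * (1 - a^2/(2*π^2))
  have hstep3 : Real.sin a ≤ a * (1 - a^2/(2*Real.pi^2)) := by
    have hhalf : Real.sin a = 2 * Real.sin (a/2) * Real.cos (a/2) := by
      rw [show a = 2*(a/2) by ring, Real.sin_two_mul]
      ring_nf
    have hs1 : Real.sin (a/2) ≤ a/2 := Real.sin_le (by linarith)
    have hc1 : 0 ≤ Real.cos (a/2) :=
      Real.cos_nonneg_of_mem_Icc ⟨by linarith, by linarith⟩
    have hc2 : Real.cos (a/2) ≤ 1 - 2/Real.pi^2 * (a/2)^2 :=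
      Real.cos_le_one_sub_mul_cos_sq (x := a/2) (by rw [_root_.abs_of_nonneg (by linarith : (0:ℝ) ≤ a/2)]; linarith)
    have hs0 : 0 ≤ Real.sin (a/2) := Real.sin_nonneg_of_nonneg_of_le_pi (by linarith) (by linarith)
    calc Real.sin a = 2 * Real.sin (a/2) * Real.cos (a/2) := hhalf
      _ ≤ 2 * (a/2) * Real.cos (a/2) := by nlinarith
      _ ≤ 2 * (a/2) * (1 - 2/Real.pi^2 * (a/2)^2) := by nlinarith
      _ = a * (1 - a^2/(2*Real.pi^2)) := by field_simp
  -- Step 4 : a ≤ 4.5 * τ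
  have hstep4 : a ≤ 4.5 * τ := by
    have hcomb : a * (1-τ^2) ≤ a * (1 - a^2/(2*Real.pi^2)) := hstep2.trans hstep3
    have hkey : 1 - τ^2 ≤ 1 - a^2/(2*Real.pi^2) := (mul_le_mul_iff_right₀ ha1).1 hcomb
    have hkey2 : a^2/(2*Real.pi^2) ≤ τ^2 := by linarith
    have ha2le : a^2 ≤ 2*Real.pi^2*τ^2 := by
      rw [div_le_iff₀ (by positivity)] at hkey2
      linarith
    have hπsq : Real.pi^2 < 9.9225 := by nlinarith
    have ha2le' : a^2 ≤ 19.845*τ^2 := by nlinarith [sq_nonneg τ]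
    nlinarith [ha2le', ha1, h1]
  -- Step 5 : |θ τ| ≤ 5 τ and ≤ 5/6
  have habsθ : ‖θ τ‖ ≤ 5 * τ := by
    have := Complex.norm_le_abs_re_add_abs_im (θ τ)
    rw [← ha_def, ← hb_def] at this
    have hab : |a| = a := _root_.abs_of_pos ha1
    have hbb : |b| = -b := abs_of_neg hb
    nlinarith
  have habs1 : ‖Complex.I * θ τ‖ ≤ 1 := by
    rw [norm_mul, Complex.norm_I, one_mul]
    nlinarith
  -- Step 6 : |θ² - 2τ²| ≤ 56 τ³
  have hbound := Complex.exp_bound habs1 (n := 3) (by norm_num)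
  have hsum : (∑ m ∈ Finset.range 3, (Complex.I * θ τ) ^ m / m.factorial)
      = 1 + Complex.I * θ τ + (Complex.I * θ τ)^2 / 2 := by
    simp [Finset.sum_range_succ]
  rw [hsum] at hbound
  have hrw : Complex.exp (Complex.I * θ τ) - (1 + Complex.I * θ τ + (Complex.I * θ τ)^2/2)
      = -(((τ:ℂ))^2) + (θ τ)^2/2 := by
    rw [hcast]
    linear_combination heq - (θ τ)^2/2 * Complex.I_sq
  rw [hrw] at hbound
  have habsI : ‖Complex.I * θ τ‖ = ‖θ τ‖ := by
    rw [norm_mul, Complex.norm_I, one_mul]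
  rw [habsI] at hbound
  have hb6 : ‖(θ τ)^2 - 2*((τ:ℂ))^2‖ ≤ 56 * τ^3 := by
    have heq2 : (θ τ)^2 - 2*((τ:ℂ))^2 = 2 * (-(((τ:ℂ))^2) + (θ τ)^2/2) := by ring
    have h0 : (0:ℝ) ≤ ‖θ τ‖ := norm_nonneg _
    have h3 : ‖θ τ‖^3 ≤ (5*τ)^3 := by
      exact pow_le_pow_left₀ h0 habsθ 3
    rw [heq2, norm_mul, Complex.norm_two]
    have hc : ‖-(((τ:ℂ))^2) + (θ τ)^2/2‖ ≤ (5*τ)^3 * (2/9) := by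
      refine le_trans hbound ?_
      norm_num [Nat.factorial]
      nlinarith [h3]
    nlinarith [hc]
  -- Step 7 : conclude
  have hτC : ((τ:ℂ)) ≠ 0 := by exact_mod_cast ne_of_gt h1
  have hsqrt2 : ((Real.sqrt 2 : ℝ):ℂ)^2 = 2 := by
    rw [← Complex.ofReal_pow, Real.sq_sqrt (by norm_num : (0:ℝ) ≤ 2)]
    norm_num
  have hfactor : (θ τ/(τ:ℂ) - ((Real.sqrt 2:ℝ):ℂ)) * (θ τ/(τ:ℂ) + ((Real.sqrt 2:ℝ):ℂ))
      = ((θ τ)^2 - 2*((τ:ℂ))^2)/((τ:ℂ))^2 := by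
    field_simp
    linear_combination (-(((τ:ℂ))^2)) * hsqrt2
  have habsfac := congrArg norm hfactor
  rw [norm_mul, norm_div] at habsfac
  have habsτ2 : ‖((τ:ℂ))^2‖ = τ^2 := by
    rw [norm_pow, Complex.norm_real, Real.norm_eq_abs, _root_.abs_of_pos h1]
  rw [habsτ2] at habsfac
  have hplusre : Real.sqrt 2 ≤ ‖θ τ/(τ:ℂ) + ((Real.sqrt 2:ℝ):ℂ)‖ := by
    have hre2 : (θ τ/(τ:ℂ) + ((Real.sqrt 2:ℝ):ℂ)).re = a/τ + Real.sqrt 2 := by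
      simp [Complex.add_re, Complex.div_ofReal_re, Complex.ofReal_re, ha_def]
    calc Real.sqrt 2 ≤ a/τ + Real.sqrt 2 := le_add_of_nonneg_left (div_nonneg ha1.le h1.le)
      _ = (θ τ/(τ:ℂ) + ((Real.sqrt 2:ℝ):ℂ)).re := hre2.symm
      _ ≤ ‖θ τ/(τ:ℂ) + ((Real.sqrt 2:ℝ):ℂ)‖ := Complex.re_le_norm _
  have hprod : ‖θ τ/(τ:ℂ) - ((Real.sqrt 2:ℝ):ℂ)‖
      * ‖θ τ/(τ:ℂ) + ((Real.sqrt 2:ℝ):ℂ)‖ ≤ 56 * τ := by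
    rw [habsfac]
    rw [div_le_iff₀ (by positivity : (0:ℝ) < τ^2)]
    calc ‖(θ τ)^2 - 2*((τ:ℂ))^2‖ ≤ 56 * τ^3 := hb6
      _ = 56 * τ * τ^2 := by ring
  have hs14 : (1.4:ℝ) ≤ Real.sqrt 2 := by
    nlinarith [Real.sq_sqrt (by norm_num : (0:ℝ) ≤ 2), Real.sqrt_nonneg 2]
  have hMnn : (0:ℝ) ≤ ‖θ τ/(τ:ℂ) - ((Real.sqrt 2:ℝ):ℂ)‖ := norm_nonneg _
  have hM : ‖θ τ/(τ:ℂ) - ((Real.sqrt 2:ℝ):ℂ)‖ * Real.sqrt 2 ≤ 56 * τ :=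
    le_trans (mul_le_mul_of_nonneg_left hplusre hMnn) hprod
  nlinarith [hM, hs14, hMnn]


/-- The parametrization `θ(τ)` of the steepest descent curve (with `θ(τ) ∈ Ω` solving
`e^{iθ} - iθ = 1 - τ²` for `τ > 0`, `θ(0) = 0`, and `θ(τ) = -conj(θ(-τ))` for `τ < 0`)
is differentiable, with `θ'(τ) = 2iτ/(iθ(τ) - τ²)` for `τ ≠ 0` and `θ'(0) = √2`. -/
theorem theta_parametrization_deriv (θ : ℝ → ℂ)
    (hpos : ∀ τ : ℝ, 0 < τ →
      ((θ τ).re ∈ Set.Ioo 0 Real.pi ∧ (θ τ).im < 0) ∧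
      Complex.exp (Complex.I * θ τ) - Complex.I * θ τ = 1 - (τ : ℂ) ^ 2)
    (h0 : θ 0 = 0)
    (hneg : ∀ τ : ℝ, τ < 0 → θ τ = -(starRingEnd ℂ) (θ (-τ))) :
    (∀ τ : ℝ, τ ≠ 0 →
      HasDerivAt θ (2 * Complex.I * (τ : ℂ) / (Complex.I * θ τ - (τ : ℂ) ^ 2)) τ) ∧
    HasDerivAt θ ((Real.sqrt 2 : ℂ)) 0 := by
  constructor
  · intro τ hτ
    rcases lt_or_gt_of_ne hτ with h | h
    · exact deriv_neg_side θ hpos hneg h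
    · exact deriv_pos_side θ hpos h
  · rw [hasDerivAt_iff_tendsto_slope]
    have hslope : ∀ᶠ τ : ℝ in nhdsWithin (0:ℝ) {(0:ℝ)}ᶜ, slope θ 0 τ = θ τ / (τ:ℂ) := by
      filter_upwards [eventually_mem_nhdsWithin] with τ hτ
      have hτne : τ ≠ 0 := hτ
      rw [slope_def_module, h0, sub_zero, sub_zero, Complex.real_smul, Complex.ofReal_inv]
      rw [div_eq_inv_mul]
    have hsmall : ∀ᶠ τ : ℝ in nhdsWithin (0:ℝ) {(0:ℝ)}ᶜ, |τ| ≤ 1/6 := by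
      apply Filter.Eventually.filter_mono nhdsWithin_le_nhds
      filter_upwards [Metric.ball_mem_nhds (0:ℝ) (by norm_num : (0:ℝ) < 1/6)] with τ hτ
      rw [Metric.mem_ball, Real.dist_eq, sub_zero] at hτ
      exact hτ.le
    have hb : ∀ᶠ τ : ℝ in nhdsWithin (0:ℝ) {(0:ℝ)}ᶜ,
        ‖slope θ 0 τ - ((Real.sqrt 2 : ℝ):ℂ)‖ ≤ 40 * |τ| := by
      filter_upwards [hslope, hsmall, eventually_mem_nhdsWithin] with τ hs h6 hτ0
      rw [hs]
      have hτne : τ ≠ 0 := hτ0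
      rcases lt_or_gt_of_ne hτne with h | h
      · have hpos' : (0:ℝ) < -τ := by linarith
        have h6' : -τ ≤ 1/6 := by rw [abs_of_neg h] at h6; linarith
        have hbp := bound_pos_side θ hpos hpos' h6'
        have hθ : θ τ / (τ:ℂ) = (starRingEnd ℂ) (θ (-τ) / ((-τ:ℝ):ℂ)) := by
          rw [hneg τ h, map_div₀, Complex.conj_ofReal]
          push_cast
          ring
        rw [hθ]
        have hconj : (starRingEnd ℂ) (θ (-τ) / ((-τ:ℝ):ℂ)) - ((Real.sqrt 2:ℝ):ℂ)
            = (starRingEnd ℂ) (θ (-τ) / ((-τ:ℝ):ℂ) - ((Real.sqrt 2:ℝ):ℂ)) := by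
          rw [map_sub, Complex.conj_ofReal]
        rw [hconj, Complex.norm_conj, abs_of_neg h]
        exact hbp
      · rw [abs_of_pos h]
        exact bound_pos_side θ hpos h (by rwa [abs_of_pos h] at h6)
    have hg0 : Filter.Tendsto (fun τ:ℝ => 40*|τ|) (nhdsWithin (0:ℝ) {(0:ℝ)}ᶜ) (nhds 0) := by
      have h1 : Filter.Tendsto (fun τ:ℝ => 40*|τ|) (nhds 0) (nhds (40*|(0:ℝ)|)) :=
        (continuous_const.mul _root_.continuous_abs).tendsto 0
      norm_num at h1
      exact h1.mono_left nhdsWithin_le_nhds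
    have hfin := squeeze_zero_norm' hb hg0
    exact tendsto_sub_nhds_zero_iff.1 hfin
end

section
/- The analytic local inverse θ(τ) of τ(θ) = θ·sqrt((1 + iθ - e^{iθ})/θ²) near τ = 0 (normalized by θ'(0) = √2) has Taylor expansion θ(τ) = √2·τ - (i/3)τ² - (1/(9√2))τ³ + (2i/135)τ⁴ + (1/(540√2))τ⁵ + O(τ⁶). -/
/-!
Differentiating `e^{iθ} - iθ = 1 - τ²` and eliminating `e^{iθ}` with the equation itself gives
the first-order equation `(θ + iτ²) θ' = 2τ`. By the Leibniz rule its `n`-th derivative at `0` is a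
recurrence for `aₖ = θ⁽ᵏ⁾(0)` in which `aₙ` appears with the coefficient `(n + 1) a₁ = (n + 1) √2`,
so `a₂, …, a₅` are determined successively.
-/

open Complex Filter Topology Finset

theorem mul_deriv_eventuallyEq_of_exp_sub_eq {θ : ℂ → ℂ} {a : ℂ}
    (hθ : ∀ᶠ τ in 𝓝 a, DifferentiableAt ℂ θ τ)
    (heq : ∀ᶠ τ in 𝓝 a, exp (I * θ τ) - I * θ τ = 1 - τ ^ 2) :
    (fun τ ↦ θ τ * deriv θ τ + I * τ ^ 2 * deriv θ τ) =ᶠ[𝓝 a] fun τ ↦ 2 * τ := by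
  filter_upwards [heq.eventually_nhds, heq, hθ] with τ hev hτ hd
  have hL : HasDerivAt (fun t ↦ exp (I * θ t) - I * θ t)
      (exp (I * θ τ) * (I * deriv θ τ) - I * deriv θ τ) τ :=
    (hd.hasDerivAt.const_mul I).cexp.sub (hd.hasDerivAt.const_mul I)
  have hR : HasDerivAt (fun t : ℂ ↦ 1 - t ^ 2) (-(2 * τ)) τ := by
    simpa using (hasDerivAt_pow 2 τ).const_sub 1
  have key := hL.unique (hR.congr_of_eventuallyEq hev)
  linear_combination I * deriv θ τ * hτ - key + θ τ * deriv θ τ * I_sq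

theorem sum_choose_mul_iteratedDeriv_eq_zero {θ : ℂ → ℂ} (hθ : AnalyticAt ℂ θ 0)
    (hode : (fun τ ↦ θ τ * deriv θ τ + I * τ ^ 2 * deriv θ τ) =ᶠ[𝓝 0] fun τ ↦ 2 * τ)
    {n : ℕ} (hn : 2 ≤ n) :
    ∑ i ∈ range (n + 1), (n.choose i : ℂ) * iteratedDeriv i θ 0 * iteratedDeriv (n - i + 1) θ 0
      + 2 * n.choose 2 * I * iteratedDeriv (n - 1) θ 0 = 0 := by
  have hθ' := hθ.deriv
  have hsq : AnalyticAt ℂ (fun τ : ℂ ↦ I * τ ^ 2) 0 := by fun_prop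
  have h := hode.iteratedDeriv_eq n
  rw [iteratedDeriv_fun_add (f := fun τ ↦ θ τ * deriv θ τ) (g := fun τ ↦ I * τ ^ 2 * deriv θ τ)
      (hθ.fun_mul hθ').contDiffAt (hsq.fun_mul hθ').contDiffAt,
    iteratedDeriv_fun_mul hθ.contDiffAt hθ'.contDiffAt,
    iteratedDeriv_fun_mul hsq.contDiffAt hθ'.contDiffAt,
    iteratedDeriv_const_mul_field, iteratedDeriv_fun_id_zero, if_neg (by omega), mul_zero] at h
  simp only [← iteratedDeriv_succ', iteratedDeriv_const_mul_field, iteratedDeriv_fun_pow_zero] at h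
  rw [add_comm, sum_eq_single_of_mem 2 (by simp; omega) (fun i _ hi ↦ by simp [hi]),
    show n - 2 + 1 = n - 1 by omega] at h
  simp only [if_true, Nat.factorial_two, Nat.cast_ofNat] at h
  linear_combination h

theorem taylor_coefficients_of_recurrence {c a₂ a₃ a₄ a₅ : ℂ} (hc : c ^ 2 = 2)
    (e₂ : 3 * c * a₂ + 2 * I * c = 0)
    (e₃ : 4 * c * a₃ + 3 * a₂ ^ 2 + 6 * I * a₂ = 0)
    (e₄ : 5 * c * a₄ + 10 * a₂ * a₃ + 12 * I * a₃ = 0)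
    (e₅ : 6 * c * a₅ + 15 * a₂ * a₄ + 10 * a₃ ^ 2 + 20 * I * a₄ = 0) :
    a₂ / 2 = -I / 3 ∧ a₃ / 6 = -(1 / (9 * c)) ∧ a₄ / 24 = 2 * I / 135 ∧
      a₅ / 120 = 1 / (540 * c) := by
  have hc₀ : c ≠ 0 := by rintro rfl; norm_num at hc
  obtain rfl : a₂ = -2 * I / 3 := mul_left_cancel₀ hc₀ (by linear_combination e₂ / 3)
  have h₃ : c * a₃ = -2 / 3 := by linear_combination e₃ / 4 + 2 / 3 * I_sq
  obtain rfl : a₄ = 16 * I / 45 := by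
    linear_combination c / 10 * e₄ - 16 * I / 30 * h₃ - a₄ / 2 * hc
  have h₃sq : a₃ ^ 2 = 2 / 9 := by
    linear_combination (c * a₃ - 2 / 3) / 2 * h₃ - a₃ ^ 2 / 2 * hc
  have h₅ : c * a₅ = 2 / 9 := by
    linear_combination e₅ / 6 - 5 / 3 * h₃sq - 16 / 27 * I_sq
  refine ⟨by ring, ?_, by ring, ?_⟩
  · field_simp
    linear_combination 9 * h₃
  · field_simp
    linear_combination 540 * h₅

/-- Taylor expansion of the parametrization `θ(τ)` of the steepest descent curve:
if `θ` is analytic near `0`, `θ(0) = 0`, `θ'(0) = √2`, and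
`e^{iθ(τ)} - iθ(τ) = 1 - τ²` near `0`, then
`θ(τ) = √2 τ - (i/3)τ² - τ³/(9√2) + (2i/135)τ⁴ + τ⁵/(540√2) + O(τ⁶)`. -/
theorem theta_taylor_coefficients (θ : ℂ → ℂ) (hθ : AnalyticAt ℂ θ 0)
    (h0 : θ 0 = 0) (h1 : deriv θ 0 = (Real.sqrt 2 : ℂ))
    (heq : ∀ᶠ τ in nhds (0 : ℂ),
      Complex.exp (Complex.I * θ τ) - Complex.I * θ τ = 1 - τ ^ 2) :
    iteratedDeriv 2 θ 0 / 2 = -Complex.I / 3 ∧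
    iteratedDeriv 3 θ 0 / 6 = -(1 / (9 * (Real.sqrt 2 : ℂ))) ∧
    iteratedDeriv 4 θ 0 / 24 = 2 * Complex.I / 135 ∧
    iteratedDeriv 5 θ 0 / 120 = 1 / (540 * (Real.sqrt 2 : ℂ)) := by
  have hode := mul_deriv_eventuallyEq_of_exp_sub_eq
    (hθ.eventually_analyticAt.mono fun _ h ↦ h.differentiableAt) heq
  have e₂ := sum_choose_mul_iteratedDeriv_eq_zero hθ hode (n := 2) le_rfl
  have e₃ := sum_choose_mul_iteratedDeriv_eq_zero hθ hode (n := 3) (by norm_num)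
  have e₄ := sum_choose_mul_iteratedDeriv_eq_zero hθ hode (n := 4) (by norm_num)
  have e₅ := sum_choose_mul_iteratedDeriv_eq_zero hθ hode (n := 5) (by norm_num)
  norm_num [sum_range_succ, Nat.choose, h0, h1] at e₂ e₃ e₄ e₅
  have hc : ((Real.sqrt 2 : ℝ) : ℂ) ^ 2 = 2 := by norm_cast; simp
  exact taylor_coefficients_of_recurrence hc (by linear_combination e₂) (by linear_combination e₃)
    (by linear_combination e₄) (by linear_combination e₅)
end
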